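/- arXiv:1208.3167 — 3 statements merged into one kernel-verified Lean document; each statement's English description precedes it below -/
import Mathlib

section
/- Let S = ⟨e, e+d, e+2d, …, e+td⟩ be generated by an arithmetic sequence with gcd(e,d) = 1 and t < e. Then d_max(S) equals the number of partitions of e − 1 into parts of size at most t. -/
open Finset

/-- The set of factorizations of `n` over the generating tuple `g`. -/
def Fac {t : ℕ} (g : Fin (t + 1) → ℕ) (n : ℕ) : Set (Fin (t + 1) → ℕ) :=
  {c | ∑ i, c i * g i = n}

/-- The numerical semigroup generated by the tuple `g`. -/
def Sg {t : ℕ} (g : Fin (t + 1) → ℕ) : Set ℕ :=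
  {n | ∃ c : Fin (t + 1) → ℕ, ∑ i, c i * g i = n}

/-- The order of `n`: the maximal length of a factorization of `n` over `g`. -/
noncomputable def ordOf {t : ℕ} (g : Fin (t + 1) → ℕ) (n : ℕ) : ℕ :=
  sSup {r | ∃ c ∈ Fac g n, ∑ i, c i = r}

/-- The minimal length of a factorization of `n` over `g`. -/
noncomputable def minordOf {t : ℕ} (g : Fin (t + 1) → ℕ) (n : ℕ) : ℕ :=
  sInf {r | ∃ c ∈ Fac g n, ∑ i, c i = r}

/-- The denumerant of `n` with respect to `g`. -/
noncomputable def denum {t : ℕ} (g : Fin (t + 1) → ℕ) (n : ℕ) : ℕ :=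
  (Fac g n).ncard

/-- The maximal denumerant of an element: the number of maximal-length factorizations. -/
noncomputable def dmaxEl {t : ℕ} (g : Fin (t + 1) → ℕ) (n : ℕ) : ℕ :=
  {c ∈ Fac g n | ∑ i, c i = ordOf g n}.ncard

/-- The maximal denumerant of the semigroup generated by `g`. -/
noncomputable def dmax {t : ℕ} (g : Fin (t + 1) → ℕ) : ℕ :=
  sSup {m | ∃ n ∈ Sg g, dmaxEl g n = m}

/-- The generating tuple `D` of the blowup: `{e, a₁ - e, …, a_t - e}`. -/
def blowD {t : ℕ} (g : Fin (t + 1) → ℕ) : Fin (t + 1) → ℕ :=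
  fun i => if i = 0 then g 0 else g i - g 0

/-- The adjustment of `n`:  `n - ord(n) * e`. -/
noncomputable def adj {t : ℕ} (g : Fin (t + 1) → ℕ) (n : ℕ) : ℕ :=
  n - ordOf g n * g 0

/-- The Apery set with respect to `u` of the semigroup generated by `g`. -/
def Ap {t : ℕ} (g : Fin (t + 1) → ℕ) (u : ℕ) : Set ℕ :=
  {w ∈ Sg g | ¬ ∃ b ∈ Sg g, w = b + u}

/-- `g` is the (strictly increasing) minimal generating tuple of a numerical semigroup
with multiplicity `g 0`. -/
structure IsNumSgp {t : ℕ} (g : Fin (t + 1) → ℕ) : Prop where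
  mono : StrictMono g
  pos : 0 < g 0
  gcd_eq_one : Finset.gcd Finset.univ g = 1
  minimal : ∀ i, ∀ c : Fin (t + 1) → ℕ, ∑ j, c j * g j = g i → c = Pi.single i 1

/-- `S` is additive: `ord(u + e) = ord(u) + 1` for all `u ∈ S`. -/
def IsAdditive {t : ℕ} (g : Fin (t + 1) → ℕ) : Prop :=
  ∀ u ∈ Sg g, ordOf g (u + g 0) = ordOf g u + 1

/-- Membership of an integer in a set of naturals. -/
def ZMem (T : Set ℕ) (z : ℤ) : Prop := 0 ≤ z ∧ z.toNat ∈ T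

/-- The Frobenius number: the largest integer not in `T`. -/
noncomputable def Frob (T : Set ℕ) : ℤ := sSup {z : ℤ | ¬ ZMem T z}

/-- `T` is symmetric: whenever `x + y = F(T)`, exactly one of `x`, `y` lies in `T`. -/
def Symm (T : Set ℕ) : Prop := ∀ x y : ℤ, x + y = Frob T → (ZMem T x ↔ ¬ ZMem T y)

/-- An abstract numerical semigroup. -/
structure IsNumSemigroup (T : Set ℕ) : Prop where
  zero_mem : 0 ∈ T
  add_mem : ∀ a ∈ T, ∀ b ∈ T, a + b ∈ T
  cofinite : Tᶜ.Finite

/-- The Apery set of an abstract numerical semigroup. -/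
def ApS (T : Set ℕ) (u : ℕ) : Set ℕ := {w ∈ T | ¬ ∃ b ∈ T, w = b + u}


namespace P415
variable {t : ℕ}

lemma key_sum (e d : ℕ) (c : Fin (t + 1) → ℕ) :
    ∑ i, c i * (e + (i : ℕ) * d)
      = (∑ i, c i) * e + (∑ i : Fin (t + 1), (i : ℕ) * c i) * d := by
  rw [Finset.sum_mul, Finset.sum_mul, ← Finset.sum_add_distrib]
  exact Finset.sum_congr rfl fun i _ => by ring

lemma exists_fac (ht : 0 < t) : ∀ L m : ℕ, m ≤ t * L →
    ∃ c : Fin (t + 1) → ℕ, (∑ i, c i) = L ∧ (∑ i : Fin (t + 1), (i : ℕ) * c i) = m := by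
  intro L
  induction L with
  | zero =>
    intro m hm
    have hm0 : m = 0 := by omega
    exact ⟨0, by simp, by simp [hm0]⟩
  | succ L ih =>
    intro m hm
    by_cases hmt : m ≤ t
    · refine ⟨fun i => (if i = (⟨m, by omega⟩ : Fin (t + 1)) then 1 else 0)
        + (if i = 0 then L else 0), ?_, ?_⟩
      · rw [Finset.sum_add_distrib]
        simp [add_comm]
      · simp only [mul_add, Finset.sum_add_distrib, mul_ite, mul_one, mul_zero]
        simp
    · have hm' : m - t ≤ t * L := by
        have : t * (L + 1) = t * L + t := by ring
        omega
      obtain ⟨c, hc1, hc2⟩ := ih (m - t) hm'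
      refine ⟨fun i => c i + (if i = (⟨t, by omega⟩ : Fin (t + 1)) then 1 else 0), ?_, ?_⟩
      · rw [Finset.sum_add_distrib, hc1]
        simp
      · simp only [mul_add, Finset.sum_add_distrib, mul_ite, mul_one, mul_zero, hc2]
        simp
        omega

lemma len_le (e d : ℕ) (hd : 0 < d) (hgcd : Nat.gcd e d = 1)
    {L m L' m' : ℕ} (hm : m < e) (heq : L' * e + m' * d = L * e + m * d) :
    L' ≤ L := by
  by_contra hcon
  push_neg at hcon
  have he : 0 < e := lt_of_le_of_lt (Nat.zero_le m) hm
  have hz : (e : ℤ) * ((L' : ℤ) - L) = (d : ℤ) * ((m : ℤ) - m') := by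
    have h2 : ((L' : ℤ)) * e + m' * d = L * e + m * d := by exact_mod_cast heq
    linarith
  have hco : IsCoprime (e : ℤ) (d : ℤ) := by
    rw [Int.isCoprime_iff_gcd_eq_one]
    simpa using hgcd
  have hdvd : (e : ℤ) ∣ (d : ℤ) * ((m : ℤ) - m') := ⟨(L' : ℤ) - L, hz.symm⟩
  obtain ⟨k, hk⟩ := hco.dvd_of_dvd_mul_left hdvd
  have he' : (0 : ℤ) < e := by exact_mod_cast he
  have hd' : (0 : ℤ) < d := by exact_mod_cast hd
  have hL' : (L : ℤ) < L' := by exact_mod_cast hcon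
  have hpos : 0 < (d : ℤ) * ((m : ℤ) - m') := by
    rw [← hz]; exact mul_pos he' (by linarith)
  have hmm : 0 < (m : ℤ) - m' := by nlinarith
  have hk1 : 1 ≤ k := by nlinarith [hk]
  have : (e : ℤ) ≤ (m : ℤ) - m' := by nlinarith [hk]
  have hmZ : (m : ℤ) < e := by exact_mod_cast hm
  linarith

/-- helper: Multiset.card of a Finset sum -/
lemma card_finsum {α : Type*} (s : Finset α) (f : α → Multiset ℕ) :
    Multiset.card (∑ i ∈ s, f i) = ∑ i ∈ s, Multiset.card (f i) := by
  induction s using Finset.cons_induction with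
  | empty => simp
  | cons a s ha ih => rw [Finset.sum_cons, Finset.sum_cons, Multiset.card_add, ih]

lemma sum_finsum {α : Type*} (s : Finset α) (f : α → Multiset ℕ) :
    (∑ i ∈ s, f i).sum = ∑ i ∈ s, (f i).sum := by
  induction s using Finset.cons_induction with
  | empty => simp
  | cons a s ha ih => rw [Finset.sum_cons, Finset.sum_cons, Multiset.sum_add, ih]

lemma card_le_sum_multiset (s : Multiset ℕ) (h : ∀ x ∈ s, 1 ≤ x) :
    Multiset.card s ≤ s.sum := by
  calc Multiset.card s = (Multiset.map (fun _ => 1) s).sum := by simp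
  _ ≤ (Multiset.map id s).sum := Multiset.sum_map_le_sum_map _ _ (by simpa using h)
  _ = s.sum := by rw [Multiset.map_id]

/-- The multiset of parts associated to an exponent vector. -/
def pts (c : Fin (t + 1) → ℕ) : Multiset ℕ :=
  ∑ i ∈ Finset.univ.erase 0, Multiset.replicate (c i) (i : ℕ)

lemma mem_pts {c : Fin (t + 1) → ℕ} {j : ℕ} (h : j ∈ pts c) : 1 ≤ j ∧ j ≤ t := by
  rw [pts, Multiset.mem_sum] at h
  obtain ⟨i, hi, hj⟩ := h
  rw [Multiset.eq_of_mem_replicate hj]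
  have h0 : i ≠ 0 := Finset.ne_of_mem_erase hi
  have h0' : (i : ℕ) ≠ 0 := fun h => h0 (Fin.ext (by simpa using h))
  exact ⟨by omega, Fin.is_le i⟩

lemma count_pts (c : Fin (t + 1) → ℕ) {j : ℕ} (h1 : 1 ≤ j) (h2 : j ≤ t) :
    (pts c).count j = c ⟨j, by omega⟩ := by
  rw [pts, Multiset.count_sum']
  rw [Finset.sum_eq_single (⟨j, by omega⟩ : Fin (t + 1))]
  · rw [Multiset.count_replicate, if_pos rfl]
  · intro b _ hbne
    rw [Multiset.count_replicate, if_neg]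
    intro hbj
    exact hbne (Fin.ext (by simpa using hbj))
  · intro habs
    exact absurd (Finset.mem_erase.mpr ⟨Fin.ne_of_val_ne (by simp; omega), Finset.mem_univ _⟩) habs

lemma sum_pts (c : Fin (t + 1) → ℕ) :
    (pts c).sum = ∑ i : Fin (t + 1), (i : ℕ) * c i := by
  rw [pts, sum_finsum]
  rw [← Finset.add_sum_erase _ (fun i : Fin (t + 1) => (i : ℕ) * c i) (Finset.mem_univ 0)]
  simp only [Fin.val_zero, zero_mul, zero_add]
  exact Finset.sum_congr rfl fun i _ => by rw [Multiset.sum_replicate, smul_eq_mul, mul_comm]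

lemma card_pts (c : Fin (t + 1) → ℕ) :
    Multiset.card (pts c) = ∑ i ∈ Finset.univ.erase 0, c i := by
  rw [pts, card_finsum]
  exact Finset.sum_congr rfl fun i _ => Multiset.card_replicate _ _

/-- The map from partitions to exponent vectors. -/
def psi (L : ℕ) {m : ℕ} (p : Nat.Partition m) : Fin (t + 1) → ℕ :=
  fun i => if i = 0 then L - Multiset.card p.parts else p.parts.count (i : ℕ)

lemma pts_psi {m : ℕ} (p : Nat.Partition m) (hp : ∀ x ∈ p.parts, x ≤ t) (L : ℕ) :
    pts (psi L p : Fin (t + 1) → ℕ) = p.parts := by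
  ext j
  by_cases hj : 1 ≤ j ∧ j ≤ t
  · rw [count_pts _ hj.1 hj.2]
    rw [psi, if_neg (Fin.ne_of_val_ne (by simp; omega))]
  · rw [Multiset.count_eq_zero.mpr, Multiset.count_eq_zero.mpr]
    · intro hmem
      have h1 := p.parts_pos hmem
      have h2 := hp _ hmem
      omega
    · intro hmem
      have := mem_pts hmem
      omega

lemma psi_w {m : ℕ} (p : Nat.Partition m) (hp : ∀ x ∈ p.parts, x ≤ t) (L : ℕ) :
    (∑ i : Fin (t + 1), (i : ℕ) * psi L p i) = m := by
  rw [← sum_pts, pts_psi p hp, p.parts_sum]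

lemma psi_len {m : ℕ} (p : Nat.Partition m) (hp : ∀ x ∈ p.parts, x ≤ t) (L : ℕ)
    (hL : m ≤ L) : (∑ i : Fin (t + 1), psi L p i) = L := by
  rw [← Finset.add_sum_erase _ _ (Finset.mem_univ 0)]
  have h1 : ∑ i ∈ Finset.univ.erase 0, (psi L p : Fin (t + 1) → ℕ) i = Multiset.card p.parts := by
    have := card_pts (psi L p : Fin (t + 1) → ℕ)
    rw [pts_psi p hp] at this
    rw [← this]
  have hcard : Multiset.card p.parts ≤ m := by
    have h := card_le_sum_multiset p.parts fun x hx => p.parts_pos hx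
    rwa [p.parts_sum] at h
  have h0 : (psi L p : Fin (t + 1) → ℕ) 0 = L - Multiset.card p.parts := if_pos rfl
  omega

lemma psi_inj {m : ℕ} (L : ℕ) :
    Set.InjOn (psi L (t := t)) {p : Nat.Partition m | ∀ x ∈ p.parts, x ≤ t} := by
  intro p hp q hq hpq
  apply Nat.Partition.ext
  rw [← pts_psi p hp L, ← pts_psi q hq L, hpq]

lemma psi_surj (L m : ℕ) {c : Fin (t + 1) → ℕ}
    (h1 : (∑ i, c i) = L) (h2 : (∑ i : Fin (t + 1), (i : ℕ) * c i) = m) :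
    ∃ p ∈ {p : Nat.Partition m | ∀ x ∈ p.parts, x ≤ t}, psi L p = c := by
  refine ⟨⟨pts c, fun hx => (mem_pts hx).1, by rw [sum_pts, h2]⟩,
    fun x hx => (mem_pts hx).2, ?_⟩
  funext i
  by_cases hi : i = 0
  · subst hi
    rw [psi, if_pos rfl]
    simp only [card_pts]
    have := Finset.add_sum_erase Finset.univ c (Finset.mem_univ (0 : Fin (t + 1)))
    omega
  · rw [psi, if_neg hi]
    have hv : 1 ≤ (i : ℕ) := by
      have : (i : ℕ) ≠ 0 := fun h => hi (Fin.ext (by simpa using h))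
      omega
    rw [count_pts c hv (Fin.is_le i)]


lemma card_fac_eq (L m : ℕ) (hL : m ≤ L) :
    {c : Fin (t + 1) → ℕ | (∑ i, c i) = L ∧ (∑ i : Fin (t + 1), (i : ℕ) * c i) = m}.ncard
      = {p : Nat.Partition m | ∀ x ∈ p.parts, x ≤ t}.ncard := by
  have himg : psi L '' {p : Nat.Partition m | ∀ x ∈ p.parts, x ≤ t}
      = {c : Fin (t + 1) → ℕ | (∑ i, c i) = L ∧ (∑ i : Fin (t + 1), (i : ℕ) * c i) = m} := by
    ext c
    constructor
    · rintro ⟨p, hp, rfl⟩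
      exact ⟨psi_len p hp L hL, psi_w p hp L⟩
    · rintro ⟨h1, h2⟩
      obtain ⟨p, hp, hpc⟩ := psi_surj L m h1 h2
      exact ⟨p, hp, hpc⟩
  rw [← himg, Set.ncard_image_of_injOn (psi_inj L)]

lemma card_fac_le (L m : ℕ) :
    {c : Fin (t + 1) → ℕ | (∑ i, c i) = L ∧ (∑ i : Fin (t + 1), (i : ℕ) * c i) = m}.ncard
      ≤ {p : Nat.Partition m | ∀ x ∈ p.parts, x ≤ t}.ncard := by
  have hsub : {c : Fin (t + 1) → ℕ | (∑ i, c i) = L ∧ (∑ i : Fin (t + 1), (i : ℕ) * c i) = m}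
      ⊆ psi L '' {p : Nat.Partition m | ∀ x ∈ p.parts, x ≤ t} := by
    rintro c ⟨h1, h2⟩
    obtain ⟨p, hp, hpc⟩ := psi_surj L m h1 h2
    exact ⟨p, hp, hpc⟩
  calc {c : Fin (t + 1) → ℕ | (∑ i, c i) = L ∧ (∑ i : Fin (t + 1), (i : ℕ) * c i) = m}.ncard
      ≤ (psi L '' {p : Nat.Partition m | ∀ x ∈ p.parts, x ≤ t}).ncard :=
        Set.ncard_le_ncard hsub ((Set.toFinite _).image _)
    _ ≤ {p : Nat.Partition m | ∀ x ∈ p.parts, x ≤ t}.ncard :=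
        Set.ncard_image_le (Set.toFinite _)

def pad (m k : ℕ) (p : Nat.Partition m) : Nat.Partition (m + k) where
  parts := p.parts + Multiset.replicate k 1
  parts_pos := by
    intro x hx
    rcases Multiset.mem_add.mp hx with h | h
    · exact p.parts_pos h
    · rw [Multiset.eq_of_mem_replicate h]; norm_num
  parts_sum := by
    rw [Multiset.sum_add, Multiset.sum_replicate, p.parts_sum, smul_eq_mul, mul_one]

lemma part_mono (ht : 0 < t) (m m' : ℕ) (hmm : m' ≤ m) :
    {p : Nat.Partition m' | ∀ x ∈ p.parts, x ≤ t}.ncard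
      ≤ {p : Nat.Partition m | ∀ x ∈ p.parts, x ≤ t}.ncard := by
  obtain ⟨k, rfl⟩ : ∃ k, m = m' + k := ⟨m - m', by omega⟩
  apply Set.ncard_le_ncard_of_injOn (pad m' k)
  · intro p hp x hx
    rcases Multiset.mem_add.mp hx with h | h
    · exact hp x h
    · rw [Multiset.eq_of_mem_replicate h]; omega
  · intro p hp q hq hpq
    apply Nat.Partition.ext
    have h2 : p.parts + Multiset.replicate k 1 = q.parts + Multiset.replicate k 1 :=
      congrArg Nat.Partition.parts hpq
    exact add_right_cancel h2


lemma fac_mem_iff (e d n : ℕ) (c : Fin (t + 1) → ℕ) :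
    c ∈ Fac (fun i : Fin (t + 1) => e + (i : ℕ) * d) n ↔
      (∑ i, c i) * e + (∑ i : Fin (t + 1), (i : ℕ) * c i) * d = n := by
  rw [Fac, Set.mem_setOf_eq, key_sum]

lemma ord_eq (e d : ℕ) (ht : 0 < t) (hd : 0 < d) (hgcd : Nat.gcd e d = 1)
    (L m : ℕ) (hm : m < e) (hfeas : m ≤ t * L) :
    ordOf (fun i : Fin (t + 1) => e + (i : ℕ) * d) (L * e + m * d) = L := by
  obtain ⟨c₀, hc1, hc2⟩ := exists_fac ht L m hfeas
  have hmem : L ∈ {r | ∃ c ∈ Fac (fun i : Fin (t + 1) => e + (i : ℕ) * d) (L * e + m * d),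
      ∑ i, c i = r} := ⟨c₀, (fac_mem_iff e d _ c₀).mpr (by rw [hc1, hc2]), hc1⟩
  have hub : ∀ r ∈ {r | ∃ c ∈ Fac (fun i : Fin (t + 1) => e + (i : ℕ) * d) (L * e + m * d),
      ∑ i, c i = r}, r ≤ L := by
    rintro r ⟨c, hc, rfl⟩
    exact len_le e d hd hgcd hm ((fac_mem_iff e d _ c).mp hc)
  rw [ordOf]
  exact le_antisymm (csSup_le ⟨L, hmem⟩ hub) (le_csSup ⟨L, hub⟩ hmem)

lemma dmaxEl_le (e d : ℕ) (ht : 0 < t) (hte : t < e) (hd : 0 < d)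
    (hgcd : Nat.gcd e d = 1) (n : ℕ)
    (hn : n ∈ Sg (fun i : Fin (t + 1) => e + (i : ℕ) * d)) :
    dmaxEl (fun i : Fin (t + 1) => e + (i : ℕ) * d) n
      ≤ {p : Nat.Partition (e - 1) | ∀ x ∈ p.parts, x ≤ t}.ncard := by
  obtain ⟨c0, hc0⟩ := hn
  have he : 0 < e := by omega
  have hAne : Set.Nonempty {r | ∃ c ∈ Fac (fun i : Fin (t + 1) => e + (i : ℕ) * d) n,
      ∑ i, c i = r} := ⟨∑ i, c0 i, c0, hc0, rfl⟩
  have hAbdd : BddAbove {r | ∃ c ∈ Fac (fun i : Fin (t + 1) => e + (i : ℕ) * d) n,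
      ∑ i, c i = r} := by
    refine ⟨n, ?_⟩
    rintro r ⟨c, hc, rfl⟩
    calc (∑ i, c i) ≤ ∑ i, c i * (e + (i : ℕ) * d) := by
          apply Finset.sum_le_sum
          intro i _
          exact Nat.le_mul_of_pos_right _ (by omega)
      _ = n := hc
  have hordA : ordOf (fun i : Fin (t + 1) => e + (i : ℕ) * d) n
      ∈ {r | ∃ c ∈ Fac (fun i : Fin (t + 1) => e + (i : ℕ) * d) n, ∑ i, c i = r} := by
    rw [ordOf]
    exact Nat.sSup_mem hAne hAbdd
  obtain ⟨cs, hcs, hlen⟩ := hordA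
  set q := ordOf (fun i : Fin (t + 1) => e + (i : ℕ) * d) n with hq
  set ms := ∑ i : Fin (t + 1), (i : ℕ) * cs i with hms
  have hneq : q * e + ms * d = n := by
    have h3 := (fac_mem_iff e d n cs).mp hcs
    rw [hlen] at h3
    exact h3
  have hmt : ms ≤ t * q := by
    rw [hms, ← hlen, Finset.mul_sum]
    exact Finset.sum_le_sum fun i _ => Nat.mul_le_mul_right _ (Fin.is_le i)
  have hmlt : ms < e := by
    by_contra hcon
    push_neg at hcon
    have hfe : ms - e ≤ t * (q + d) := by
      have h1 : t * q ≤ t * (q + d) := Nat.mul_le_mul_left _ (by omega)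
      omega
    obtain ⟨c', h1, h2⟩ := exists_fac ht (q + d) (ms - e) hfe
    have hc' : c' ∈ Fac (fun i : Fin (t + 1) => e + (i : ℕ) * d) n := by
      rw [fac_mem_iff e d n c', h1, h2, ← hneq]
      zify [hcon]
      ring
    have hle : q + d ≤ q := by
      rw [hq, ordOf]
      exact le_csSup hAbdd ⟨c', hc', h1⟩
    omega
  have hset : {c ∈ Fac (fun i : Fin (t + 1) => e + (i : ℕ) * d) n |
        ∑ i, c i = ordOf (fun i : Fin (t + 1) => e + (i : ℕ) * d) n}
      = {c : Fin (t + 1) → ℕ | (∑ i, c i) = q ∧ (∑ i : Fin (t + 1), (i : ℕ) * c i) = ms} := by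
    ext c
    simp only [Set.mem_setOf_eq, ← hq]
    constructor
    · rintro ⟨hcf, hclen⟩
      have h3 := (fac_mem_iff e d n c).mp hcf
      rw [hclen, ← hneq] at h3
      refine ⟨hclen, ?_⟩
      have h4 : (∑ i : Fin (t + 1), (i : ℕ) * c i) * d = ms * d := by omega
      exact Nat.eq_of_mul_eq_mul_right hd h4
    · rintro ⟨h1, h2⟩
      exact ⟨(fac_mem_iff e d n c).mpr (by rw [h1, h2, hneq]), h1⟩
  rw [dmaxEl, hset]
  calc ({c : Fin (t + 1) → ℕ | (∑ i, c i) = q ∧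
        (∑ i : Fin (t + 1), (i : ℕ) * c i) = ms}).ncard
      ≤ {p : Nat.Partition ms | ∀ x ∈ p.parts, x ≤ t}.ncard := card_fac_le q ms
    _ ≤ {p : Nat.Partition (e - 1) | ∀ x ∈ p.parts, x ≤ t}.ncard :=
        part_mono ht (e - 1) ms (by omega)

lemma dmaxEl_witness (e d : ℕ) (ht : 0 < t) (hte : t < e) (hd : 0 < d)
    (hgcd : Nat.gcd e d = 1) :
    (e * e + (e - 1) * d) ∈ Sg (fun i : Fin (t + 1) => e + (i : ℕ) * d) ∧
    dmaxEl (fun i : Fin (t + 1) => e + (i : ℕ) * d) (e * e + (e - 1) * d)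
      = {p : Nat.Partition (e - 1) | ∀ x ∈ p.parts, x ≤ t}.ncard := by
  have he : 0 < e := by omega
  have hfeas : e - 1 ≤ t * e := by
    have h1 : e ≤ t * e := Nat.le_mul_of_pos_left _ ht
    omega
  have hordn0 : ordOf (fun i : Fin (t + 1) => e + (i : ℕ) * d) (e * e + (e - 1) * d) = e :=
    ord_eq e d ht hd hgcd e (e - 1) (by omega) hfeas
  obtain ⟨c₀, hc01, hc02⟩ := exists_fac ht e (e - 1) hfeas
  have hc0f : c₀ ∈ Fac (fun i : Fin (t + 1) => e + (i : ℕ) * d) (e * e + (e - 1) * d) :=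
    (fac_mem_iff e d _ c₀).mpr (by rw [hc01, hc02])
  refine ⟨⟨c₀, hc0f⟩, ?_⟩
  have hset0 : {c ∈ Fac (fun i : Fin (t + 1) => e + (i : ℕ) * d) (e * e + (e - 1) * d) |
        ∑ i, c i = ordOf (fun i : Fin (t + 1) => e + (i : ℕ) * d) (e * e + (e - 1) * d)}
      = {c : Fin (t + 1) → ℕ | (∑ i, c i) = e ∧
          (∑ i : Fin (t + 1), (i : ℕ) * c i) = e - 1} := by
    ext c
    simp only [Set.mem_setOf_eq, hordn0]
    constructor
    · rintro ⟨hcf, hclen⟩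
      have h3 := (fac_mem_iff e d _ c).mp hcf
      rw [hclen] at h3
      refine ⟨hclen, ?_⟩
      have h4 : (∑ i : Fin (t + 1), (i : ℕ) * c i) * d = (e - 1) * d := by omega
      exact Nat.eq_of_mul_eq_mul_right hd h4
    · rintro ⟨h1, h2⟩
      exact ⟨(fac_mem_iff e d _ c).mpr (by rw [h1, h2]), h1⟩
  rw [dmaxEl, hset0, card_fac_eq e (e - 1) (by omega)]

end P415

/-- Proposition 4.15: if `S = ⟨e, e+d, …, e+td⟩` with `gcd(e,d) = 1`, then `d_max(S)` is
the number of partitions of `e - 1` into parts of size at most `t`. -/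
theorem stmt17 (e d t : ℕ) (ht : 0 < t) (hte : t < e) (hgcd : Nat.gcd e d = 1) :
    dmax (fun i : Fin (t + 1) => e + (i : ℕ) * d) =
      {p : Nat.Partition (e - 1) | ∀ x ∈ p.parts, x ≤ t}.ncard := by
  have hd : 0 < d := by
    rcases Nat.eq_zero_or_pos d with h | h
    · subst h
      rw [Nat.gcd_zero_right] at hgcd
      omega
    · exact h
  obtain ⟨hmemS, hwit⟩ := P415.dmaxEl_witness e d ht hte hd hgcd
  have hub : ∀ mm ∈ {m | ∃ n ∈ Sg (fun i : Fin (t + 1) => e + (i : ℕ) * d),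
      dmaxEl (fun i : Fin (t + 1) => e + (i : ℕ) * d) n = m},
      mm ≤ {p : Nat.Partition (e - 1) | ∀ x ∈ p.parts, x ≤ t}.ncard := by
    rintro mm ⟨n, hn, rfl⟩
    exact P415.dmaxEl_le e d ht hte hd hgcd n hn
  have hmemB : {p : Nat.Partition (e - 1) | ∀ x ∈ p.parts, x ≤ t}.ncard
      ∈ {m | ∃ n ∈ Sg (fun i : Fin (t + 1) => e + (i : ℕ) * d),
        dmaxEl (fun i : Fin (t + 1) => e + (i : ℕ) * d) n = m} := ⟨_, hmemS, hwit⟩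
  rw [dmax]
  exact le_antisymm (csSup_le ⟨_, hmemB⟩ hub) (le_csSup ⟨_, hub⟩ hmemB)
end

section
/- Let S = ⟨e, e+d, e+2d⟩ with gcd(e,d) = 1 and e ≥ 3 (embedding dimension 3 arithmetic case). Then d_max(S) = ⌈e/2⌉. -/
open Finset

section Aux

variable (e d : ℕ)

def auxG : Fin 3 → ℕ := fun i => e + (i : ℕ) * d

lemma auxFac_iff (n : ℕ) (c : Fin 3 → ℕ) :
    c ∈ Fac (auxG e d) n ↔ (c 0 + c 1 + c 2) * e + (c 1 + 2 * c 2) * d = n := by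
  unfold Fac auxG
  rw [Set.mem_setOf_eq, Fin.sum_univ_three]
  constructor <;> intro h <;> rw [← h] <;> simp <;> ring

lemma auxLen_le {n : ℕ} (he : 1 ≤ e) {c : Fin 3 → ℕ} (hc : c ∈ Fac (auxG e d) n) :
    ∑ i, c i ≤ n := by
  rw [auxFac_iff] at hc
  rw [Fin.sum_univ_three]
  nlinarith [Nat.zero_le ((c 1 + 2 * c 2) * d)]

lemma auxBdd (n : ℕ) (he : 1 ≤ e) :
    BddAbove {r | ∃ c ∈ Fac (auxG e d) n, ∑ i, c i = r} := by
  refine ⟨n, fun r hr => ?_⟩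
  obtain ⟨c, hc, rfl⟩ := hr
  exact auxLen_le e d he hc

lemma auxOrd_ub {n : ℕ} (he : 1 ≤ e) {c : Fin 3 → ℕ} (hc : c ∈ Fac (auxG e d) n) :
    ∑ i, c i ≤ ordOf (auxG e d) n :=
  le_csSup (auxBdd e d n he) ⟨c, hc, rfl⟩

lemma auxOrd_mem {n : ℕ} (he : 1 ≤ e) (hn : n ∈ Sg (auxG e d)) :
    ∃ c ∈ Fac (auxG e d) n, ∑ i, c i = ordOf (auxG e d) n := by
  obtain ⟨c, hc⟩ := hn
  have hne : {r | ∃ c ∈ Fac (auxG e d) n, ∑ i, c i = r}.Nonempty :=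
    ⟨∑ i, c i, ⟨c, hc, rfl⟩⟩
  exact Nat.sSup_mem hne (auxBdd e d n he)

/-- A maximal-length factorization has `c 1 + 2 c 2 ≤ e - 1`. -/
lemma auxT_le {n : ℕ} (he : 3 ≤ e) (hd : 1 ≤ d) {c : Fin 3 → ℕ}
    (hc : c ∈ Fac (auxG e d) n) (hord : ∑ i, c i = ordOf (auxG e d) n) :
    c 1 + 2 * c 2 ≤ e - 1 := by
  by_contra hT
  set L := c 0 + c 1 + c 2 with hL
  set T := c 1 + 2 * c 2 with hTdef
  have hTe : e ≤ T := by omega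
  set s := T - e with hs
  have hceil : T - T / 2 ≤ L := by omega
  set c' : Fin 3 → ℕ := ![L + d - (s - 2 * (s / 2)) - s / 2, s - 2 * (s / 2), s / 2] with hc'
  have hc'0 : c' 0 = L + d - (s - 2 * (s / 2)) - s / 2 := rfl
  have hc'1 : c' 1 = s - 2 * (s / 2) := rfl
  have hc'2 : c' 2 = s / 2 := rfl
  have hsum : c' 0 + c' 1 + c' 2 = L + d := by
    rw [hc'0, hc'1, hc'2]; omega
  have hT' : c' 1 + 2 * c' 2 = s := by rw [hc'1, hc'2]; omega
  have hcF : L * e + T * d = n := (auxFac_iff e d n c).mp hc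
  have hc'F : c' ∈ Fac (auxG e d) n := by
    rw [auxFac_iff, hsum, hT', ← hcF]
    have : T = e + s := by omega
    rw [this]; ring
  have hle : ∑ i, c' i ≤ ordOf (auxG e d) n := auxOrd_ub e d (by omega) hc'F
  rw [Fin.sum_univ_three, hsum] at hle
  rw [Fin.sum_univ_three] at hord
  omega

lemma auxIic_ncard (m : ℕ) : (Set.Iic m).ncard = m + 1 := by
  rw [← Finset.coe_Iic, Set.ncard_coe_finset, Nat.card_Iic]

lemma auxDmaxEl_le {n : ℕ} (he : 3 ≤ e) (hd : 1 ≤ d) (hn : n ∈ Sg (auxG e d)) :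
    dmaxEl (auxG e d) n ≤ (e + 1) / 2 := by
  obtain ⟨c₀, hc₀F, hc₀ord⟩ := auxOrd_mem e d (by omega) hn
  have hT₀le : c₀ 1 + 2 * c₀ 2 ≤ e - 1 := auxT_le e d he hd hc₀F hc₀ord
  have hkey : ∀ c ∈ {c ∈ Fac (auxG e d) n | ∑ i, c i = ordOf (auxG e d) n},
      c 1 + 2 * c 2 = c₀ 1 + 2 * c₀ 2 ∧ c 0 + c 1 + c 2 = c₀ 0 + c₀ 1 + c₀ 2 := by
    rintro c ⟨hcF, hcord⟩
    have hA : c 0 + c 1 + c 2 = c₀ 0 + c₀ 1 + c₀ 2 := by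
      have h1 := hcord.trans hc₀ord.symm
      rw [Fin.sum_univ_three, Fin.sum_univ_three] at h1
      exact h1
    have eq1 := (auxFac_iff e d n c).mp hcF
    have eq2 := (auxFac_iff e d n c₀).mp hc₀F
    rw [hA] at eq1
    have h2 : (c₀ 0 + c₀ 1 + c₀ 2) * e + (c 1 + 2 * c 2) * d
        = (c₀ 0 + c₀ 1 + c₀ 2) * e + (c₀ 1 + 2 * c₀ 2) * d := eq1.trans eq2.symm
    exact ⟨Nat.eq_of_mul_eq_mul_right hd (Nat.add_left_cancel h2), hA⟩
  have hinj : Set.InjOn (fun c : Fin (2 + 1) → ℕ => c 2)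
      {c ∈ Fac (auxG e d) n | ∑ i, c i = ordOf (auxG e d) n} := by
    intro a ha b hb hab
    obtain ⟨ha1, ha2⟩ := hkey a ha
    obtain ⟨hb1, hb2⟩ := hkey b hb
    simp only at hab
    have h0 : a 0 = b 0 := by omega
    have h1 : a 1 = b 1 := by omega
    have h2 : a 2 = b 2 := by omega
    funext i
    fin_cases i
    · exact h0
    · exact h1
    · exact h2
  have hmaps : ∀ c ∈ {c ∈ Fac (auxG e d) n | ∑ i, c i = ordOf (auxG e d) n},
      (fun c : Fin (2 + 1) → ℕ => c 2) c ∈ Set.Iic ((c₀ 1 + 2 * c₀ 2) / 2) := by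
    intro c hc
    obtain ⟨h1, _⟩ := hkey c hc
    simp only [Set.mem_Iic]
    omega
  have hcard : {c ∈ Fac (auxG e d) n | ∑ i, c i = ordOf (auxG e d) n}.ncard
      ≤ (Set.Iic ((c₀ 1 + 2 * c₀ 2) / 2)).ncard :=
    Set.ncard_le_ncard_of_injOn (fun c : Fin (2 + 1) → ℕ => c 2) hmaps hinj (Set.finite_Iic _)
  rw [auxIic_ncard] at hcard
  have hdm : dmaxEl (auxG e d) n
      = {c ∈ Fac (auxG e d) n | ∑ i, c i = ordOf (auxG e d) n}.ncard := rfl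
  have harith : (c₀ 1 + 2 * c₀ 2) / 2 + 1 ≤ (e + 1) / 2 := by
    clear hkey hinj hmaps hcard hdm hn
    omega
  rw [hdm]
  exact hcard.trans harith

lemma auxLower (he : 3 ≤ e) (hd : 1 ≤ d) (hgcd : Nat.gcd e d = 1) :
    (e - 1) * (e + d) ∈ Sg (auxG e d) ∧
      dmaxEl (auxG e d) ((e - 1) * (e + d)) = (e + 1) / 2 := by
  set m := e - 1 with hm
  set n₀ := m * (e + d) with hn₀
  set w : Fin 3 → ℕ := ![0, m, 0] with hw
  have hwF : w ∈ Fac (auxG e d) n₀ := by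
    rw [auxFac_iff]
    show (0 + m + 0) * e + (m + 2 * 0) * d = m * (e + d)
    ring
  have hwsum : ∑ i, w i = m := by
    rw [Fin.sum_univ_three]; show 0 + m + 0 = m; omega
  have hSg : n₀ ∈ Sg (auxG e d) := ⟨w, hwF⟩
  have hcop : IsCoprime (d : ℤ) (e : ℤ) := by
    rw [Int.isCoprime_iff_gcd_eq_one, Int.gcd_natCast_natCast, Nat.gcd_comm]
    exact hgcd
  have hub : ∀ c ∈ Fac (auxG e d) n₀, c 0 + c 1 + c 2 ≤ m := by
    intro c hc
    rw [auxFac_iff] at hc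
    set L := c 0 + c 1 + c 2 with hL
    set T := c 1 + 2 * c 2 with hT
    by_contra hLm
    push_neg at hLm
    have hZ : (L : ℤ) * e + (T : ℤ) * d = (m : ℤ) * e + (m : ℤ) * d := by
      have : L * e + T * d = m * e + m * d := by
        rw [hc]; ring
      exact_mod_cast congrArg (Nat.cast : ℕ → ℤ) this
    have hdvd : (d : ℤ) ∣ ((L : ℤ) - m) * e := ⟨(m : ℤ) - T, by linear_combination hZ⟩
    have hdvd2 : (d : ℤ) ∣ (L : ℤ) - m := hcop.dvd_of_dvd_mul_right hdvd
    have hLpos : (0 : ℤ) < (L : ℤ) - m := by exact_mod_cast (by omega : (0:ℤ) < (L:ℤ) - (m:ℤ))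
    have hdL : (d : ℤ) ≤ (L : ℤ) - m := Int.le_of_dvd hLpos hdvd2
    have h1 : ((L : ℤ) - m) * e = ((m : ℤ) - T) * d := by linear_combination hZ
    have h2 : (d : ℤ) * e ≤ ((L : ℤ) - m) * e :=
      mul_le_mul_of_nonneg_right hdL (by positivity)
    have h3 : ((m : ℤ) - T) * d ≤ (m : ℤ) * d :=
      mul_le_mul_of_nonneg_right (by omega) (by positivity)
    have h4 : (m : ℤ) * d < (e : ℤ) * d := by
      apply mul_lt_mul_of_pos_right _ (by exact_mod_cast hd)
      have : m < e := by omega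
      exact_mod_cast this
    nlinarith
  have hord : ordOf (auxG e d) n₀ = m := by
    apply le_antisymm
    · have hne : {r | ∃ c ∈ Fac (auxG e d) n₀, ∑ i, c i = r}.Nonempty :=
        ⟨m, ⟨w, hwF, hwsum⟩⟩
      apply csSup_le hne
      rintro r ⟨c, hc, rfl⟩
      rw [Fin.sum_univ_three]
      exact hub c hc
    · exact le_csSup (auxBdd e d n₀ (by omega)) ⟨w, hwF, hwsum⟩
  have hset : {c ∈ Fac (auxG e d) n₀ | ∑ i, c i = ordOf (auxG e d) n₀}
      = (fun j : ℕ => ![j, m - 2 * j, j]) '' Set.Iic (m / 2) := by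
    ext c
    constructor
    · rintro ⟨hcF, hcord⟩
      rw [hord] at hcord
      rw [Fin.sum_univ_three] at hcord
      have hF := (auxFac_iff e d n₀ c).mp hcF
      have hT : c 1 + 2 * c 2 = m := by
        have h2 : m * e + (c 1 + 2 * c 2) * d = m * e + m * d := by
          rw [hcord] at hF
          rw [hF, hn₀]; ring
        exact Nat.eq_of_mul_eq_mul_right hd (Nat.add_left_cancel h2)
      refine ⟨c 2, by simp only [Set.mem_Iic]; omega, ?_⟩
      have g0 : c 2 = c 0 := by omega
      have g1 : m - 2 * c 2 = c 1 := by omega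
      funext i
      fin_cases i
      · exact g0
      · exact g1
      · rfl
    · rintro ⟨j, hj, rfl⟩
      simp only [Set.mem_Iic] at hj
      have h2j : 2 * j ≤ m := by omega
      constructor
      · rw [auxFac_iff]
        show (j + (m - 2 * j) + j) * e + ((m - 2 * j) + 2 * j) * d = m * (e + d)
        have e1 : j + (m - 2 * j) + j = m := by omega
        have e2 : (m - 2 * j) + 2 * j = m := by omega
        rw [e1, e2]; ring
      · rw [hord, Fin.sum_univ_three]
        show j + (m - 2 * j) + j = m
        omega
  have hinj : Set.InjOn (fun j : ℕ => ![j, m - 2 * j, j]) (Set.Iic (m / 2)) := by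
    intro a _ b _ hab
    have := congrFun hab 0
    simpa using this
  refine ⟨hSg, ?_⟩
  unfold dmaxEl
  rw [hset, Set.ncard_image_of_injOn hinj, auxIic_ncard]
  omega

end Aux

/-- The embedding dimension 3 arithmetic case: `d_max(⟨e, e+d, e+2d⟩) = ⌈e/2⌉`. -/
theorem stmt18 (e d : ℕ) (he : 3 ≤ e) (hgcd : Nat.gcd e d = 1) :
    (dmax (fun i : Fin 3 => e + (i : ℕ) * d) : ℤ) = ⌈(e : ℚ) / 2⌉ := by
  have hd : 1 ≤ d := by
    rcases Nat.eq_zero_or_pos d with h | h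
    · subst h; rw [Nat.gcd_zero_right] at hgcd; omega
    · exact h
  have hmain : dmax (auxG e d) = (e + 1) / 2 := by
    obtain ⟨hSg, hval⟩ := auxLower e d he hd hgcd
    have hmem : (e + 1) / 2 ∈ {m | ∃ n ∈ Sg (auxG e d), dmaxEl (auxG e d) n = m} :=
      ⟨(e - 1) * (e + d), hSg, hval⟩
    have hub : ∀ a ∈ {m | ∃ n ∈ Sg (auxG e d), dmaxEl (auxG e d) n = m}, a ≤ (e + 1) / 2 := by
      rintro a ⟨n, hn, rfl⟩
      exact auxDmaxEl_le e d he hd hn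
    exact le_antisymm (csSup_le ⟨_, hmem⟩ hub) (le_csSup ⟨(e + 1) / 2, hub⟩ hmem)
  have hcast : (((e + 1) / 2 : ℕ) : ℤ) = ⌈(e : ℚ) / 2⌉ := by
    rcases Nat.even_or_odd e with ⟨k, hk⟩ | ⟨k, hk⟩
    · subst hk
      rw [show ((k + k : ℕ) : ℚ) = (2 * k : ℚ) by push_cast; ring]
      rw [mul_div_cancel_left₀ _ (by norm_num : (2 : ℚ) ≠ 0), Int.ceil_natCast]
      omega
    · subst hk
      rw [show ((2 * k + 1 : ℕ) : ℚ) / 2 = 1 / 2 + (k : ℤ) by push_cast; ring,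
        Int.ceil_add_intCast]
      rw [show ⌈(1 / 2 : ℚ)⌉ = 1 by rw [Int.ceil_eq_iff] <;> norm_num]
      omega
  rw [show (fun i : Fin 3 => e + (i : ℕ) * d) = auxG e d from rfl, hmain, hcast]
end

section
/- Let S = ⟨e, e+d, e+2d, e+3d⟩ with gcd(e,d) = 1 and e ≥ 4 (embedding dimension 4 arithmetic case). Then d_max(S) equals the nearest integer to (e+2)²/12. -/
open Finset

namespace Stmt19

def wt (c : Fin 4 → ℕ) : ℕ := c 1 + 2 * c 2 + 3 * c 3
def len (c : Fin 4 → ℕ) : ℕ := c 0 + c 1 + c 2 + c 3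

lemma sum_eq (e d : ℕ) (c : Fin 4 → ℕ) :
    ∑ i, c i * (e + (i : ℕ) * d) = len c * e + wt c * d := by
  rw [Fin.sum_univ_four]
  show c 0 * (e + 0 * d) + c 1 * (e + 1 * d) + c 2 * (e + 2 * d) + c 3 * (e + 3 * d) = _
  unfold len wt
  ring

lemma len_eq (c : Fin 4 → ℕ) : ∑ i, c i = len c := by
  simp [Fin.sum_univ_four, len]

lemma wt_le (c : Fin 4 → ℕ) : wt c ≤ 3 * len c := by unfold wt len; omega

def N (m : ℕ) : ℕ := ∑ c ∈ Finset.range (m/3 + 1), ((m - 3*c)/2 + 1)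

def T (m : ℕ) : Finset (ℕ × ℕ) :=
  (Finset.range (m+1) ×ˢ Finset.range (m+1)).filter fun p => 2 * p.1 + 3 * p.2 ≤ m

lemma mem_T {m : ℕ} {p : ℕ × ℕ} : p ∈ T m ↔ 2 * p.1 + 3 * p.2 ≤ m := by
  simp only [T, Finset.mem_filter, Finset.mem_product, Finset.mem_range]
  omega

lemma T_card (m : ℕ) : (T m).card = N m := by
  have h : T m = (Finset.range (m/3 + 1)).biUnion
      (fun c => (Finset.range ((m - 3*c)/2 + 1)).image (fun b => (b, c))) := by
    ext ⟨b, c⟩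
    simp only [mem_T, Finset.mem_biUnion, Finset.mem_range, Finset.mem_image, Prod.mk.injEq]
    constructor
    · intro hle
      exact ⟨c, by omega, b, by omega, rfl, rfl⟩
    · rintro ⟨c', hc', b', hb', rfl, rfl⟩
      omega
  rw [h, Finset.card_biUnion]
  · unfold N
    congr 1
    ext c
    rw [Finset.card_image_of_injective _ (fun a b h => by simpa using congrArg Prod.fst h), Finset.card_range]
  · intro x hx y hy hxy
    simp only [Finset.disjoint_left, Finset.mem_image, Finset.mem_range]
    rintro ⟨b, c⟩ ⟨b1, _, h1⟩ ⟨b2, _, h2⟩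
    apply hxy
    cases h1; cases h2; rfl

lemma N_succ3 (m : ℕ) : N (m + 3) = N m + ((m + 3)/2 + 1) := by
  unfold N
  have h3 : (m + 3)/3 + 1 = (m/3 + 1) + 1 := by omega
  rw [h3, Finset.sum_range_succ']
  have hc : ∀ c ∈ Finset.range (m/3 + 1), (m + 3 - 3*(c+1))/2 + 1 = (m - 3*c)/2 + 1 :=
    fun c _ => by omega
  rw [Finset.sum_congr rfl hc]
  congr 1

lemma sq_mod12 (x : ℕ) : x ^ 2 % 12 = (x % 6) ^ 2 % 12 := by
  obtain ⟨q, r, hr, rfl⟩ : ∃ q r, r < 6 ∧ x = 6 * q + r := ⟨x/6, x%6, by omega, by omega⟩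
  have h2 : (6 * q + r) % 6 = r := by omega
  have key : (6 * q + r) ^ 2 = 12 * (3 * q^2 + q * r) + r^2 := by ring
  rw [key, h2, Nat.mul_add_mod]

lemma f_step (m : ℕ) : ((m + 6)^2 + 6)/12 = ((m + 3)^2 + 6)/12 + ((m + 3)/2 + 1) := by
  have ha := sq_mod12 (m + 3)
  set A := (m + 3)^2 with hA
  have hb : (m + 6)^2 = A + (6 * m + 27) := by rw [hA]; ring
  rw [hb]
  have hcases : (m+3) % 6 = 0 ∨ (m+3) % 6 = 1 ∨ (m+3) % 6 = 2 ∨ (m+3) % 6 = 3 ∨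
      (m+3) % 6 = 4 ∨ (m+3) % 6 = 5 := by omega
  rcases hcases with h|h|h|h|h|h <;> rw [h] at ha <;> norm_num at ha <;> omega

lemma N_eq_f : ∀ m, N m = ((m + 3)^2 + 6)/12 := by
  intro m
  induction m using Nat.strong_induction_on with
  | _ m ih =>
    match m with
    | 0 => decide
    | 1 => decide
    | 2 => decide
    | (k+3) => rw [N_succ3, ih k (by omega), f_step]



def mk (L m : ℕ) : Fin 4 → ℕ := ![L - (m+2)/3, m % 3 % 2, m % 3 / 2, m / 3]

lemma mk_wt (L m : ℕ) : wt (mk L m) = m := by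
  simp only [mk, wt, Matrix.cons_val_one, Matrix.head_cons, Matrix.cons_val_two,
    Matrix.tail_cons, Matrix.cons_val_three, Matrix.cons_val_zero]
  omega

lemma mk_len (L m : ℕ) (h : m ≤ 3*L) : len (mk L m) = L := by
  simp only [mk, len, Matrix.cons_val_zero, Matrix.cons_val_one, Matrix.head_cons,
    Matrix.cons_val_two, Matrix.tail_cons, Matrix.cons_val_three]
  omega

section Main

variable {e d : ℕ}

lemma fac_iff {n : ℕ} {c : Fin 4 → ℕ} :
    c ∈ Fac (fun i : Fin 4 => e + (i : ℕ) * d) n ↔ len c * e + wt c * d = n := by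
  unfold Fac
  rw [Set.mem_setOf_eq, sum_eq]

lemma ord_spec (he : 1 ≤ e) {n : ℕ} (hn : n ∈ Sg (fun i : Fin 4 => e + (i : ℕ) * d)) :
    (∃ c : Fin 4 → ℕ, len c * e + wt c * d = n ∧
        len c = ordOf (fun i : Fin 4 => e + (i : ℕ) * d) n) ∧
    ∀ c : Fin 4 → ℕ, len c * e + wt c * d = n →
        len c ≤ ordOf (fun i : Fin 4 => e + (i : ℕ) * d) n := by
  set g := fun i : Fin 4 => e + (i : ℕ) * d with hg
  set R := {r | ∃ c ∈ Fac g n, ∑ i, c i = r} with hR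
  have hbdd : BddAbove R := by
    refine ⟨n, fun r hr => ?_⟩
    obtain ⟨c, hc, rfl⟩ := hr
    rw [fac_iff] at hc
    rw [len_eq]
    calc len c ≤ len c * e := Nat.le_mul_of_pos_right _ (by omega)
      _ ≤ n := le_trans (Nat.le_add_right _ _) hc.le
  have hne : R.Nonempty := by
    obtain ⟨c, hc⟩ := hn
    exact ⟨∑ i, c i, c, hc, rfl⟩
  constructor
  · have := Nat.sSup_mem hne hbdd
    obtain ⟨c, hc, hlen⟩ := this
    rw [fac_iff] at hc
    rw [len_eq] at hlen
    exact ⟨c, hc, hlen⟩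
  · intro c hc
    have : len c ∈ R := ⟨c, fac_iff.2 hc, len_eq c⟩
    exact le_csSup hbdd this

lemma wt_lt (he : 4 ≤ e) (hd : 1 ≤ d) {n : ℕ} {c : Fin 4 → ℕ}
    (hn : n ∈ Sg (fun i : Fin 4 => e + (i : ℕ) * d))
    (hc : len c * e + wt c * d = n)
    (hmax : len c = ordOf (fun i : Fin 4 => e + (i : ℕ) * d) n) : wt c < e := by
  by_contra hge
  push_neg at hge
  set L := len c
  set m := wt c
  have hfac' : len (mk (L + d) (m - e)) * e + wt (mk (L + d) (m - e)) * d = n := by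
    rw [mk_wt, mk_len _ _ (by have := wt_le c; omega)]
    calc (L + d) * e + (m - e) * d = L * e + ((m - e) * d + e * d) := by ring
      _ = L * e + m * d := by rw [← add_mul, Nat.sub_add_cancel hge]
      _ = n := hc
  have hub := (ord_spec (by omega) hn).2 _ hfac'
  rw [mk_len _ _ (by have := wt_le c; omega), ← hmax] at hub
  omega

lemma special_mem (he : 4 ≤ e) :
    (e-1) * e + (e-1) * d ∈ Sg (fun i : Fin 4 => e + (i : ℕ) * d) := by
  refine ⟨mk (e-1) (e-1), ?_⟩
  rw [sum_eq, mk_wt, mk_len _ _ (by omega)]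

lemma len_le_special (he : 4 ≤ e) (hd : 1 ≤ d) (hgcd : Nat.Coprime e d) {L m : ℕ}
    (h : L * e + m * d = (e-1) * e + (e-1) * d) : L ≤ e - 1 := by
  by_contra hL
  push_neg at hL
  have hLe : e ≤ L := by omega
  have hme : m < e - 1 := by
    by_contra hm
    push_neg at hm
    have h1 : e * e ≤ L * e := Nat.mul_le_mul_right e hLe
    have h2 : (e-1) * d ≤ m * d := Nat.mul_le_mul_right d hm
    have h3 : (e-1) * e < e * e := by
      have : 0 < e := by omega
      exact Nat.mul_lt_mul_of_lt_of_le (by omega) (le_refl e) this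
    linarith
  set A := L - (e - 1) with hA
  set B := (e - 1) - m with hB
  have hA1 : 1 ≤ A := by omega
  have hB1 : 1 ≤ B ∧ B ≤ e - 1 := by omega
  have hL' : L = (e - 1) + A := by omega
  have hm' : e - 1 = m + B := by omega
  have hAB : A * e = B * d := by
    rw [hL'] at h
    rw [hm'] at h
    have e1 : ((e-1) + A) * e = (e-1) * e + A * e := by ring
    have e2 : (m + B) * d = m * d + B * d := by ring
    rw [hm'] at e1
    linarith [h, e1, e2]
  have hdvd : e ∣ B * d := ⟨A, by rw [← hAB]; ring⟩
  have heB : e ∣ B := Nat.Coprime.dvd_of_dvd_mul_right hgcd hdvd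
  have := Nat.le_of_dvd (by omega) heB
  omega

lemma ord_special (he : 4 ≤ e) (hd : 1 ≤ d) (hgcd : Nat.Coprime e d) :
    ordOf (fun i : Fin 4 => e + (i : ℕ) * d) ((e-1) * e + (e-1) * d) = e - 1 := by
  obtain ⟨⟨c, hc, hlen⟩, hub⟩ := ord_spec (e := e) (d := d) (by omega) (special_mem he)
  have h1 := len_le_special he hd hgcd hc
  have h2 : len (mk (e-1) (e-1)) * e + wt (mk (e-1) (e-1)) * d = (e-1) * e + (e-1) * d := by
    rw [mk_wt, mk_len _ _ (by omega)]
  have := hub _ h2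
  rw [mk_len _ _ (by omega)] at this
  omega


lemma dmaxEl_le (he : 4 ≤ e) (hd : 1 ≤ d) {n : ℕ}
    (hn : n ∈ Sg (fun i : Fin 4 => e + (i : ℕ) * d)) :
    dmaxEl (fun i : Fin 4 => e + (i : ℕ) * d) n ≤ N (e - 1) := by
  set g := fun i : Fin 4 => e + (i : ℕ) * d with hg
  obtain ⟨⟨c₀, hc₀, hlen₀⟩, hub⟩ := ord_spec (e := e) (d := d) (by omega) hn
  have hm0 : wt c₀ < e := wt_lt he hd hn hc₀ hlen₀
  set M := {c ∈ Fac g n | ∑ i, c i = ordOf g n} with hM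
  have hMc : ∀ c ∈ M, wt c = wt c₀ ∧ len c = len c₀ := by
    intro c hc
    obtain ⟨hfac, hl⟩ := hc
    rw [fac_iff] at hfac
    rw [len_eq] at hl
    have hl' : len c = len c₀ := by rw [hl, hlen₀]
    refine ⟨?_, hl'⟩
    rw [hl'] at hfac
    have : wt c * d = wt c₀ * d := by
      have h2 : len c₀ * e + wt c₀ * d = n := hc₀
      omega
    exact Nat.eq_of_mul_eq_mul_right (by omega) this
  have hinj : Set.InjOn (fun c : Fin 4 → ℕ => (c 2, c 3)) M := by
    intro c hc c' hc' hcc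
    obtain ⟨hw, hl⟩ := hMc c hc
    obtain ⟨hw', hl'⟩ := hMc c' hc'
    have h2 : c 2 = c' 2 := congrArg Prod.fst hcc
    have h3 : c 3 = c' 3 := congrArg Prod.snd hcc
    unfold wt at hw hw'
    unfold len at hl hl'
    have h1 : c 1 = c' 1 := by omega
    have h0 : c 0 = c' 0 := by omega
    funext i
    fin_cases i
    · exact h0
    · exact h1
    · exact h2
    · exact h3
  have himg : (fun c : Fin 4 → ℕ => (c 2, c 3)) '' M ⊆ ↑(T (e - 1)) := by
    rintro p ⟨c, hc, rfl⟩
    obtain ⟨hw, _⟩ := hMc c hc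
    rw [Finset.mem_coe, mem_T]
    show 2 * c 2 + 3 * c 3 ≤ e - 1
    have hm0' : wt c₀ < e := hm0
    unfold wt at hw hm0'
    omega
  calc dmaxEl g n = M.ncard := rfl
    _ = ((fun c : Fin 4 → ℕ => (c 2, c 3)) '' M).ncard := (Set.ncard_image_of_injOn hinj).symm
    _ ≤ (↑(T (e - 1)) : Set (ℕ × ℕ)).ncard :=
        Set.ncard_le_ncard himg (Finset.finite_toSet _)
    _ = N (e - 1) := by rw [Set.ncard_coe_finset, T_card]

lemma dmaxEl_special (he : 4 ≤ e) (hd : 1 ≤ d) (hgcd : Nat.Coprime e d) :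
    dmaxEl (fun i : Fin 4 => e + (i : ℕ) * d) ((e-1) * e + (e-1) * d) = N (e - 1) := by
  set g := fun i : Fin 4 => e + (i : ℕ) * d with hg
  set n := (e-1) * e + (e-1) * d with hn
  set φ : ℕ × ℕ → (Fin 4 → ℕ) :=
    fun p => ![p.1 + 2 * p.2, (e-1) - 2 * p.1 - 3 * p.2, p.1, p.2] with hφ
  have hφ0 : ∀ p, φ p 0 = p.1 + 2 * p.2 := fun p => rfl
  have hφ1 : ∀ p, φ p 1 = (e-1) - 2 * p.1 - 3 * p.2 := fun p => rfl
  have hφ2 : ∀ p, φ p 2 = p.1 := fun p => rfl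
  have hφ3 : ∀ p, φ p 3 = p.2 := fun p => rfl
  have hMeq : {c ∈ Fac g n | ∑ i, c i = ordOf g n} = φ '' ↑(T (e - 1)) := by
    ext c
    constructor
    · rintro ⟨hfac, hl⟩
      rw [fac_iff] at hfac
      rw [len_eq, ord_special he hd hgcd] at hl
      have hwt : wt c = e - 1 := by
        rw [hl] at hfac
        apply Nat.eq_of_mul_eq_mul_right (show 0 < d by omega)
        omega
      refine ⟨(c 2, c 3), ?_, ?_⟩
      · rw [Finset.mem_coe, mem_T]
        unfold wt at hwt
        omega
      · unfold wt at hwt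
        unfold len at hl
        have e0 : φ (c 2, c 3) 0 = c 0 := by rw [hφ0]; simp; omega
        have e1 : φ (c 2, c 3) 1 = c 1 := by rw [hφ1]; simp; omega
        have e2 : φ (c 2, c 3) 2 = c 2 := hφ2 _
        have e3 : φ (c 2, c 3) 3 = c 3 := hφ3 _
        funext i
        fin_cases i
        · exact e0
        · exact e1
        · exact e2
        · exact e3
    · rintro ⟨p, hp, rfl⟩
      rw [Finset.mem_coe, mem_T] at hp
      have hwt : wt (φ p) = e - 1 := by
        unfold wt
        rw [hφ1, hφ2, hφ3]
        omega
      have hlen : len (φ p) = e - 1 := by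
        unfold len
        rw [hφ0, hφ1, hφ2, hφ3]
        omega
      refine ⟨fac_iff.2 ?_, ?_⟩
      · rw [hwt, hlen]
      · rw [len_eq, hlen, ord_special he hd hgcd]
  have hinj : Set.InjOn φ ↑(T (e - 1)) := by
    intro p _ q _ hpq
    have h2 : p.1 = q.1 := by
      have := congrFun hpq 2
      rwa [hφ2, hφ2] at this
    have h3 : p.2 = q.2 := by
      have := congrFun hpq 3
      rwa [hφ3, hφ3] at this
    exact Prod.ext h2 h3
  calc dmaxEl g n = (φ '' ↑(T (e - 1))).ncard := by rw [dmaxEl, hMeq]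
    _ = (↑(T (e - 1)) : Set (ℕ × ℕ)).ncard := Set.ncard_image_of_injOn hinj
    _ = N (e - 1) := by rw [Set.ncard_coe_finset, T_card]

lemma dmax_eq (he : 4 ≤ e) (hd : 1 ≤ d) (hgcd : Nat.Coprime e d) :
    dmax (fun i : Fin 4 => e + (i : ℕ) * d) = N (e - 1) := by
  set g := fun i : Fin 4 => e + (i : ℕ) * d with hg
  have hmem : N (e - 1) ∈ {m | ∃ n ∈ Sg g, dmaxEl g n = m} :=
    ⟨(e-1) * e + (e-1) * d, special_mem he, dmaxEl_special he hd hgcd⟩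
  have hub : ∀ m ∈ {m | ∃ n ∈ Sg g, dmaxEl g n = m}, m ≤ N (e - 1) := by
    rintro m ⟨n, hn, rfl⟩
    exact dmaxEl_le he hd hn
  exact le_antisymm (csSup_le ⟨_, hmem⟩ hub) (le_csSup ⟨_, hub⟩ hmem)

end Main
end Stmt19



/-- The embedding dimension 4 arithmetic case: `d_max(⟨e, e+d, e+2d, e+3d⟩)` is the
nearest integer to `(e+2)² / 12`. -/
theorem stmt19 (e d : ℕ) (he : 4 ≤ e) (hgcd : Nat.gcd e d = 1) :
    (dmax (fun i : Fin 4 => e + (i : ℕ) * d) : ℤ) = round (((e : ℚ) + 2) ^ 2 / 12) := by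
  have hd : 1 ≤ d := by
    rcases Nat.eq_zero_or_pos d with h | h
    · subst h
      simp [Nat.gcd_zero_right] at hgcd
      omega
    · exact h
  rw [Stmt19.dmax_eq he hd hgcd, Stmt19.N_eq_f]
  have h1 : e - 1 + 3 = e + 2 := by omega
  rw [h1, round_eq]
  have h2 : ((e : ℚ) + 2) ^ 2 / 12 + 1 / 2 = ((((e + 2) ^ 2 + 6 : ℕ) : ℤ) : ℚ) / ((12 : ℕ) : ℚ) := by
    push_cast
    ring
  rw [h2, Rat.floor_intCast_div_natCast]
  generalize (e + 2) ^ 2 + 6 = k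
  omega
end
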